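/- (Local-to-global orientation.) Let G be an acyclic mixed graph and v a vertex. Associate each request crossing v with a shortest path through v, and let S be a set of such shortest paths whose restrictions to the local neighborhood (star) of v can be simultaneously satisfied by a single orientation of the star's edges. Then no two paths in S are in conflict (no common undirected edge receives opposite directions), and therefore there is an orientation of all of G under which every path of S is a directed path from its source to its target. -/

import Mathlib

private lemma walkOfList19 {V : Type*} (G : SimpleGraph V) :
    ∀ (l : List (V × V)) (e₀ f₀ : V × V),
      l.Chain' (fun e f => e.2 = f.1) →
      (∀ e ∈ l, G.Adj e.1 e.2) →
      l.head? = some e₀ → l.getLast? = some f₀ →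
      ∃ w : G.Walk e₀.1 f₀.2, w.length = l.length := by
  intro l
  induction l with
  | nil => intro e₀ f₀ _ _ h; simp at h
  | cons x t ih =>
    intro e₀ f₀ hc hadj he hf
    simp only [List.head?_cons, Option.some_inj] at he
    cases t with
    | nil =>
      simp only [List.getLast?_singleton, Option.some_inj] at hf
      rw [← he, ← hf]
      exact ⟨SimpleGraph.Walk.cons (hadj x (by simp)) SimpleGraph.Walk.nil, by simp⟩
    | cons y t' =>
      subst he
      replace hc := List.isChain_cons_cons.1 hc
      rw [List.getLast?_cons_cons] at hf
      obtain ⟨w, hw⟩ := ih y f₀ hc.2 (fun e he => hadj e (by simp [he])) rfl hf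
      exact ⟨SimpleGraph.Walk.cons (hadj x (by simp)) (w.copy hc.1.symm rfl),
        by simp [hw]⟩

private lemma distLe19 {V : Type*} (G : SimpleGraph V) (l : List (V × V)) (e₀ f₀ : V × V)
    (hc : l.Chain' (fun e f => e.2 = f.1)) (hadj : ∀ e ∈ l, G.Adj e.1 e.2)
    (he : l.head? = some e₀) (hf : l.getLast? = some f₀) :
    G.dist e₀.1 f₀.2 ≤ l.length ∧ G.Reachable e₀.1 f₀.2 := by
  obtain ⟨w, hw⟩ := walkOfList19 G l e₀ f₀ hc hadj he hf
  exact ⟨hw ▸ SimpleGraph.dist_le w, w.reachable⟩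

private lemma subDist19 {V : Type*} (G : SimpleGraph V) (X Y : List (V × V)) (e₀ f₀ g : V × V)
    (hc : (X ++ Y).Chain' (fun e f => e.2 = f.1))
    (hadj : ∀ e ∈ X ++ Y, G.Adj e.1 e.2)
    (he : (X ++ Y).head? = some e₀) (hf : (X ++ Y).getLast? = some f₀)
    (hg : Y.head? = some g)
    (hlen : (X ++ Y).length = G.dist e₀.1 f₀.2) :
    G.dist e₀.1 g.1 = X.length ∧ G.dist g.1 f₀.2 = Y.length := by
  have hYne : Y ≠ [] := by rintro rfl; simp at hg
  cases X with
  | nil =>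
    simp only [List.nil_append] at he hlen ⊢
    rw [he] at hg
    obtain rfl : e₀ = g := by injection hg
    simp [SimpleGraph.dist_self, hlen.symm]
  | cons x X' =>
    set X := x :: X' with hX
    have hXne : X ≠ [] := by simp [hX]
    have heX : X.head? = some e₀ := by
      rwa [List.head?_append_of_ne_nil _ hXne] at he
    have hfY : Y.getLast? = some f₀ := by
      rwa [List.getLast?_append_of_ne_nil _ hYne] at hf
    have hsplit := List.isChain_append.1 hc
    obtain ⟨xl, hxl⟩ : ∃ xl, X.getLast? = some xl := by
      cases hX' : X.getLast? with
      | none => rw [List.getLast?_eq_none_iff] at hX'; exact absurd hX' hXne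
      | some z => exact ⟨z, rfl⟩
    have hlink : xl.2 = g.1 := hsplit.2.2 xl hxl g hg
    have h1 := distLe19 G X e₀ xl hsplit.1 (fun e he' => hadj e (by simp [he'])) heX hxl
    have h2 := distLe19 G Y g f₀ hsplit.2.1 (fun e he' => hadj e (by simp [he'])) hg hfY
    rw [hlink] at h1
    obtain ⟨p1, hp1⟩ := h1.2.exists_walk_length_eq_dist
    obtain ⟨p2, hp2⟩ := h2.2.exists_walk_length_eq_dist
    have htri : G.dist e₀.1 f₀.2 ≤ G.dist e₀.1 g.1 + G.dist g.1 f₀.2 := by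
      have := SimpleGraph.dist_le (p1.append p2)
      rwa [SimpleGraph.Walk.length_append, hp1, hp2] at this
    have hlen' : X.length + Y.length = G.dist e₀.1 f₀.2 := by
      rw [← hlen]; simp
    omega

/-- Case I distances: `v` occurs at/before `x` on shortest walk `l`. -/
private lemma distI19 {V : Type*} (G : SimpleGraph V) {v x y : V}
    (A1 A2 B : List (V × V)) (e : V × V)
    (hc : (A1 ++ (A2 ++ (x, y) :: B)).Chain' (fun e f => e.2 = f.1))
    (hadj : ∀ e' ∈ A1 ++ (A2 ++ (x, y) :: B), G.Adj e'.1 e'.2)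
    (hshort : ∀ e' f', (A1 ++ (A2 ++ (x, y) :: B)).head? = some e' →
      (A1 ++ (A2 ++ (x, y) :: B)).getLast? = some f' →
      (A1 ++ (A2 ++ (x, y) :: B)).length = G.dist e'.1 f'.2)
    (he : (A2 ++ (x, y) :: B).head? = some e) (hev : e.1 = v) :
    G.dist v x = A2.length ∧ G.dist v y = A2.length + 1 := by
  set Sfx := A2 ++ (x, y) :: B with hSfx
  have hSne : Sfx ≠ [] := by simp [hSfx]
  obtain ⟨e₀, he₀⟩ : ∃ e₀, (A1 ++ Sfx).head? = some e₀ := by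
    cases h : (A1 ++ Sfx).head? with
    | none => rw [List.head?_eq_none_iff] at h; simp [hSfx] at h
    | some z => exact ⟨z, rfl⟩
  obtain ⟨f₀, hf₀⟩ : ∃ f₀, Sfx.getLast? = some f₀ := by
    cases h : Sfx.getLast? with
    | none => rw [List.getLast?_eq_none_iff] at h; exact absurd h hSne
    | some z => exact ⟨z, rfl⟩
  have hf₀' : (A1 ++ Sfx).getLast? = some f₀ := by
    rwa [List.getLast?_append_of_ne_nil _ hSne]
  have hlen := hshort e₀ f₀ he₀ hf₀'
  have hstep1 := subDist19 G A1 Sfx e₀ f₀ e hc hadj he₀ hf₀' he hlen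
  -- Sfx is a shortest walk from v to f₀.2
  have hcS : Sfx.Chain' (fun e f => e.2 = f.1) := hc.right_of_append
  have hadjS : ∀ e' ∈ Sfx, G.Adj e'.1 e'.2 := fun e' h => hadj e' (by simp [h])
  have hlenS : Sfx.length = G.dist e.1 f₀.2 := hstep1.2.symm
  have hx : G.dist v x = A2.length := by
    have := subDist19 G A2 ((x, y) :: B) e f₀ (x, y) hcS hadjS he hf₀ rfl hlenS
    rw [← hev]; exact this.1
  refine ⟨hx, ?_⟩
  cases B with
  | nil =>
    have : Sfx.getLast? = some (x, y) := by
      rw [hSfx, List.getLast?_append_of_ne_nil _ (l₂ := [(x, y)]) (by simp)]; simp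
    rw [hf₀] at this
    obtain rfl : f₀ = (x, y) := by injection this
    have h2 : G.dist e.1 y = Sfx.length := hstep1.2
    rw [← hev, h2]
    simp [hSfx]
  | cons bb B' =>
    have hre : Sfx = (A2 ++ [(x, y)]) ++ (bb :: B') := by simp [hSfx]
    have hbb : bb.1 = y := by
      have hcy : ((x, y) :: bb :: B').Chain' (fun e f => e.2 = f.1) := by
        rw [hSfx] at hcS; exact hcS.right_of_append
      exact (List.isChain_cons_cons.1 hcy).1.symm
    have := subDist19 G (A2 ++ [(x, y)]) (bb :: B') e f₀ bb (hre ▸ hcS) (hre ▸ hadjS)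
      (hre ▸ he) (hre ▸ hf₀) rfl (by rw [← hre]; exact hlenS)
    rw [← hev, ← hbb]
    have h1 := this.1
    simpa using h1

/-- Case II distances: `v` occurs at/after `y` on shortest walk `l`. -/
private lemma distII19 {V : Type*} (G : SimpleGraph V) {v x y : V}
    (A B1 B2 : List (V × V)) (f : V × V)
    (hc : ((A ++ (x, y) :: B1) ++ B2).Chain' (fun e f => e.2 = f.1))
    (hadj : ∀ e' ∈ (A ++ (x, y) :: B1) ++ B2, G.Adj e'.1 e'.2)
    (hshort : ∀ e' f', ((A ++ (x, y) :: B1) ++ B2).head? = some e' →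
      ((A ++ (x, y) :: B1) ++ B2).getLast? = some f' →
      ((A ++ (x, y) :: B1) ++ B2).length = G.dist e'.1 f'.2)
    (hf : (A ++ (x, y) :: B1).getLast? = some f) (hfv : f.2 = v) (hyv : y ≠ v) :
    G.dist x v = B1.length + 1 ∧ G.dist y v = B1.length := by
  set Pfx := A ++ (x, y) :: B1 with hPfx
  have hPne : Pfx ≠ [] := by simp [hPfx]
  obtain ⟨e₀, he₀⟩ : ∃ e₀, Pfx.head? = some e₀ := by
    cases h : Pfx.head? with
    | none => rw [List.head?_eq_none_iff] at h; exact absurd h hPne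
    | some z => exact ⟨z, rfl⟩
  have he₀' : (Pfx ++ B2).head? = some e₀ := by
    rwa [List.head?_append_of_ne_nil _ hPne]
  have hcP : Pfx.Chain' (fun e f => e.2 = f.1) := hc.left_of_append
  have hadjP : ∀ e' ∈ Pfx, G.Adj e'.1 e'.2 := fun e' h => hadj e' (by simp [h])
  -- Pfx is a shortest walk from e₀.1 to v
  have hlenP : Pfx.length = G.dist e₀.1 v := by
    cases B2 with
    | nil =>
      rw [← hfv]
      simpa using hshort e₀ f (by simpa using he₀') (by simpa using hf)
    | cons q Q =>
      obtain ⟨f₀, hf₀⟩ : ∃ f₀, (Pfx ++ q :: Q).getLast? = some f₀ := by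
        cases h : (Pfx ++ q :: Q).getLast? with
        | none => rw [List.getLast?_eq_none_iff] at h; simp at h
        | some z => exact ⟨z, rfl⟩
      have hlen := hshort e₀ f₀ he₀' hf₀
      have := subDist19 G Pfx (q :: Q) e₀ f₀ q hc hadj he₀' hf₀ rfl hlen
      have hq1 : f.2 = q.1 := (List.isChain_append.1 hc).2.2 f hf q rfl
      rw [← this.1, ← hq1, hfv]
  have hx : G.dist x v = B1.length + 1 := by
    have := subDist19 G A ((x, y) :: B1) e₀ f (x, y) hcP hadjP he₀ hf rfl
      (by rw [hfv]; exact hlenP)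
    rw [← hfv]
    simpa using this.2
  refine ⟨hx, ?_⟩
  cases B1 with
  | nil =>
    exfalso
    have : Pfx.getLast? = some (x, y) := by
      rw [hPfx, List.getLast?_append_of_ne_nil _ (l₂ := [(x, y)]) (by simp)]; simp
    rw [hf] at this
    obtain rfl : f = (x, y) := by injection this
    exact hyv hfv
  | cons bb B1' =>
    have hre : Pfx = (A ++ [(x, y)]) ++ (bb :: B1') := by simp [hPfx]
    have hbb : bb.1 = y := by
      have hcy : ((x, y) :: bb :: B1').Chain' (fun e f => e.2 = f.1) := by
        rw [hPfx] at hcP; exact hcP.right_of_append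
      exact (List.isChain_cons_cons.1 hcy).1.symm
    have := subDist19 G (A ++ [(x, y)]) (bb :: B1') e₀ f bb (hre ▸ hcP) (hre ▸ hadjP)
      (hre ▸ he₀) (hre ▸ hf) rfl (by rw [← hre, hfv]; exact hlenP)
    rw [← hfv, ← hbb]
    simpa using this.2

private lemma dupSplit19 {α β : Type*} (g : α → β) :
    ∀ (l : List α), ¬ (l.map g).Nodup →
      ∃ (P : List α) (x : α) (M : List α) (y : α) (Q : List α),
        l = P ++ x :: M ++ y :: Q ∧ g x = g y := by
  intro l
  induction l with
  | nil => intro h; simp at h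
  | cons z t ih =>
    intro h
    rw [List.map_cons, List.nodup_cons] at h
    by_cases hz : g z ∈ t.map g
    · obtain ⟨y, hy, hgy⟩ := List.mem_map.1 hz
      obtain ⟨M, Q, rfl⟩ := List.append_of_mem hy
      exact ⟨[], z, M, y, Q, by simp, hgy.symm⟩
    · have ht : ¬ (t.map g).Nodup := fun hn => h ⟨hz, hn⟩
      obtain ⟨P, x, M, y, Q, rfl, hxy⟩ := ih ht
      exact ⟨z :: P, x, M, y, Q, by simp, hxy⟩

private lemma closedReduce19 {V : Type*} [DecidableEq V] (G : SimpleGraph V)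
    (EU : Set (Sym2 V)) (D : V → V → Prop)
    (hacyc : ¬ ∃ l : List (V × V), l ≠ [] ∧
        List.Chain' (fun e f => e.2 = f.1) l ∧
        (∀ e ∈ l, G.Adj e.1 e.2 ∧ (Sym2.mk.uncurry e ∈ EU ∨ D e.1 e.2)) ∧
        (∀ e f, l.head? = some e → l.getLast? = some f → f.2 = e.1) ∧
        (l.map Sym2.mk.uncurry).Nodup)
    (v : V) (oloc : V → V → Bool)
    (hskew : ∀ a b, G.Adj a b → oloc a b = !oloc b a) :
    ∀ (n : ℕ) (W : List (V × V)), W.length ≤ n → W ≠ [] →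
      W.Chain' (fun e f => e.2 = f.1) →
      (∀ e ∈ W, G.Adj e.1 e.2 ∧ (Sym2.mk.uncurry e ∈ EU ∨ D e.1 e.2)) →
      (∀ e ∈ W, (e.1 = v ∨ e.2 = v) → oloc e.1 e.2 = true) →
      (∀ e, W.head? = some e → e.1 = v) →
      (∀ f, W.getLast? = some f → f.2 = v) → False := by
  intro n
  induction n with
  | zero =>
    intro W hlen hne _ _ _ _ _
    exact hne (by rw [← List.length_eq_zero_iff]; omega)
  | succ n ih =>
    intro W hlen hne hc hvalid holoc hhead hlast
    by_cases hnd : (W.map Sym2.mk.uncurry).Nodup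
    · exact hacyc ⟨W, hne, hc, hvalid, fun e f he hf => (hlast f hf).trans (hhead e he).symm, hnd⟩
    obtain ⟨P, x, M, y, Q, hW, hxy⟩ := dupSplit19 Sym2.mk.uncurry W hnd
    have hcP := List.isChain_append.1 (hW ▸ hc)
    -- hcP : Chain' (P ++ x :: M) ∧ Chain' (y :: Q) ∧ link
    have hchainP : List.Chain' (fun e f => e.2 = f.1) P := hcP.1.left_of_append
    have hlinkPx : ∀ p ∈ P.getLast?, p.2 = x.1 := by
      intro p hp
      exact (List.isChain_append.1 hcP.1).2.2 p hp x (by simp)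
    rcases Sym2.mk_eq_mk_iff.1 hxy with rfl | hswap
    · -- same-direction duplicate: splice out the middle
      subst hW
      refine ih (P ++ x :: Q) ?_ (by simp) ?_ ?_ ?_ ?_ ?_
      · simp only [List.length_append, List.length_cons] at hlen ⊢; omega
      · refine List.isChain_append.2 ⟨hchainP, hcP.2.1, ?_⟩
        intro p hp q hq
        simp only [List.head?_cons, Option.mem_def, Option.some_inj] at hq
        subst hq
        exact hlinkPx p hp
      · intro e he
        refine hvalid e ?_
        simp only [List.mem_append, List.mem_cons] at he ⊢; tauto
      · intro e he
        refine holoc e ?_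
        simp only [List.mem_append, List.mem_cons] at he ⊢; tauto
      · intro e he
        apply hhead
        cases P with
        | nil => simpa using he
        | cons p P' => simpa using he
      · intro f hf
        apply hlast
        have h1 : (P ++ x :: Q).getLast? = (x :: Q).getLast? :=
          List.getLast?_append_of_ne_nil _ (by simp)
        have h2 : ((P ++ x :: M) ++ x :: Q).getLast? = (x :: Q).getLast? :=
          List.getLast?_append_of_ne_nil _ (by simp)
        rw [h2, ← h1]
        exact hf
    · -- opposite-direction duplicate
      obtain rfl : y = x.swap := by rw [hswap, Prod.swap_swap]
      subst hW
      have hxW : x ∈ (P ++ x :: M) ++ x.swap :: Q := by simp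
      have hyW : x.swap ∈ (P ++ x :: M) ++ x.swap :: Q := by simp
      by_cases hxv : x.1 = v ∨ x.2 = v
      · have h1 : oloc x.1 x.2 = true := holoc x hxW hxv
        have h2 : oloc x.2 x.1 = true := by
          have := holoc x.swap hyW (by rcases hxv with h | h
                                       · exact Or.inr h
                                       · exact Or.inl h)
          simpa using this
        have := hskew x.1 x.2 (hvalid x hxW).1
        rw [h1, h2] at this
        simp at this
      · have hPne : P ≠ [] := by
          rintro rfl
          refine hxv (Or.inl (hhead x ?_))
          simp
        have hQne : Q ≠ [] := by
          rintro rfl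
          refine hxv (Or.inl ?_)
          have := hlast x.swap (by
            rw [List.getLast?_append_of_ne_nil _ (l₂ := [x.swap]) (by simp)]
            simp)
          simpa using this
        refine ih (P ++ Q) ?_ (by simp [hPne]) ?_ ?_ ?_ ?_ ?_
        · simp only [List.length_append, List.length_cons] at hlen ⊢; omega
        · refine List.isChain_append.2 ⟨hchainP, hcP.2.1.tail, ?_⟩
          intro p hp q hq
          have hq1 : x.swap.2 = q.1 := (List.isChain_cons.1 hcP.2.1).1 q hq
          exact (hlinkPx p hp).trans hq1
        · intro e he
          refine hvalid e ?_
          simp only [List.mem_append, List.mem_cons] at he ⊢; tauto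
        · intro e he
          refine holoc e ?_
          simp only [List.mem_append, List.mem_cons] at he ⊢; tauto
        · intro e he
          apply hhead
          rw [List.head?_append_of_ne_nil P hPne] at he
          rw [show (P ++ x :: M) ++ x.swap :: Q = P ++ ((x :: M) ++ x.swap :: Q) by simp,
            List.head?_append_of_ne_nil P hPne]
          exact he
        · intro f hf
          apply hlast
          rw [List.getLast?_append_of_ne_nil _ hQne] at hf
          rw [show (P ++ x :: M) ++ x.swap :: Q = ((P ++ x :: M) ++ [x.swap]) ++ Q by simp,
            List.getLast?_append_of_ne_nil _ hQne]
          exact hf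


/-- where `v` sits on `l = A ++ (a,b) :: B` : either at/before `a`, or at/after `b`. -/
private lemma posSplit19 {V : Type*} {v a b : V} (A B : List (V × V))
    (hc : (A ++ (a, b) :: B).Chain' (fun e f => e.2 = f.1))
    (g : V × V) (hg : g ∈ A ++ (a, b) :: B) (hgv : g.1 = v ∨ g.2 = v) :
    (∃ A1 A2 e, A = A1 ++ A2 ∧ (A2 ++ (a, b) :: B).head? = some e ∧ e.1 = v)
    ∨ (∃ B1 B2 f, B = B1 ++ B2 ∧ (A ++ (a, b) :: B1).getLast? = some f ∧ f.2 = v) := by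
  rcases List.mem_append.1 hg with hgA | hgB
  · -- g ∈ A
    obtain ⟨A1, A2', rfl⟩ := List.append_of_mem hgA
    rcases hgv with hgv | hgv
    · exact Or.inl ⟨A1, g :: A2', g, rfl, by simp, hgv⟩
    · -- v = g.2 : the next edge starts at v
      refine Or.inl ⟨A1 ++ [g], A2', ?_⟩
      have hc2 : ((g :: A2') ++ (a, b) :: B).Chain' (fun e f => e.2 = f.1) := by
        have : (A1 ++ g :: A2') ++ (a, b) :: B = A1 ++ ((g :: A2') ++ (a, b) :: B) := by simp
        exact (List.isChain_append.1 (this ▸ hc)).2.1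
      obtain ⟨e, he⟩ : ∃ e, (A2' ++ (a, b) :: B).head? = some e := by
        cases h : (A2' ++ (a, b) :: B).head? with
        | none => rw [List.head?_eq_none_iff] at h; simp at h
        | some e => exact ⟨e, rfl⟩
      refine ⟨e, by simp, he, ?_⟩
      have := (List.isChain_cons.1 (show List.Chain' _ (g :: (A2' ++ (a, b) :: B)) by simpa using hc2)).1 e he
      rw [← this, hgv]
  · rcases List.mem_cons.1 hgB with rfl | hgB
    · rcases hgv with hgv | hgv
      · exact Or.inl ⟨A, [], (a, b), by simp, by simp, hgv⟩
      · refine Or.inr ⟨[], B, (a, b), rfl, ?_, hgv⟩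
        rw [List.getLast?_append_of_ne_nil _ (l₂ := [(a, b)]) (by simp)]
        simp
    · obtain ⟨B1', B2', rfl⟩ := List.append_of_mem hgB
      rcases hgv with hgv | hgv
      · -- v = g.1 : previous part ends at v
        obtain ⟨f, hf⟩ : ∃ f, (A ++ (a, b) :: B1').getLast? = some f := by
          cases h : (A ++ (a, b) :: B1').getLast? with
          | none => rw [List.getLast?_eq_none_iff] at h; simp at h
          | some f => exact ⟨f, rfl⟩
        refine Or.inr ⟨B1', g :: B2', f, by simp, hf, ?_⟩
        have hc' : ((A ++ (a, b) :: B1') ++ g :: B2').Chain' (fun e f => e.2 = f.1) := by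
          have : A ++ (a, b) :: (B1' ++ g :: B2') = (A ++ (a, b) :: B1') ++ g :: B2' := by simp
          exact this ▸ hc
        have := (List.isChain_append.1 hc').2.2 f hf g (by simp)
        rw [this, hgv]
      · refine Or.inr ⟨B1' ++ [g], B2', g, by simp, ?_, hgv⟩
        rw [show A ++ (a, b) :: (B1' ++ [g]) = (A ++ (a, b) :: B1') ++ [g] by simp,
          List.getLast?_append_of_ne_nil _ (by simp)]
        simp

private lemma cycleKernel19 {V : Type*} [DecidableEq V] (G : SimpleGraph V)
    (EU : Set (Sym2 V)) (D : V → V → Prop)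
    (hacyc : ¬ ∃ l : List (V × V), l ≠ [] ∧
        List.Chain' (fun e f => e.2 = f.1) l ∧
        (∀ e ∈ l, G.Adj e.1 e.2 ∧ (Sym2.mk.uncurry e ∈ EU ∨ D e.1 e.2)) ∧
        (∀ e f, l.head? = some e → l.getLast? = some f → f.2 = e.1) ∧
        (l.map Sym2.mk.uncurry).Nodup)
    (v : V) (oloc : V → V → Bool)
    (hskew : ∀ a b, G.Adj a b → oloc a b = !oloc b a)
    {a b : V} (hav : a ≠ v)
    (A1 A2 B : List (V × V)) (e : V × V)
    (hc1 : (A1 ++ (A2 ++ (a, b) :: B)).Chain' (fun e f => e.2 = f.1))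
    (hvalid1 : ∀ e' ∈ A1 ++ (A2 ++ (a, b) :: B),
      G.Adj e'.1 e'.2 ∧ (Sym2.mk.uncurry e' ∈ EU ∨ D e'.1 e'.2))
    (holoc1 : ∀ e' ∈ A1 ++ (A2 ++ (a, b) :: B), (e'.1 = v ∨ e'.2 = v) → oloc e'.1 e'.2 = true)
    (he : (A2 ++ (a, b) :: B).head? = some e) (hev : e.1 = v)
    (C E1 E2 : List (V × V)) (f : V × V)
    (hc2 : ((C ++ (b, a) :: E1) ++ E2).Chain' (fun e f => e.2 = f.1))
    (hvalid2 : ∀ e' ∈ (C ++ (b, a) :: E1) ++ E2,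
      G.Adj e'.1 e'.2 ∧ (Sym2.mk.uncurry e' ∈ EU ∨ D e'.1 e'.2))
    (holoc2 : ∀ e' ∈ (C ++ (b, a) :: E1) ++ E2, (e'.1 = v ∨ e'.2 = v) → oloc e'.1 e'.2 = true)
    (hf : (C ++ (b, a) :: E1).getLast? = some f) (hfv : f.2 = v) :
    False := by
  -- A2 is nonempty
  have hA2ne : A2 ≠ [] := by
    rintro rfl
    simp only [List.nil_append, List.head?_cons, Option.some_inj] at he
    rw [← he] at hev
    exact hav hev
  -- E1 is nonempty
  have hE1ne : E1 ≠ [] := by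
    rintro rfl
    have : (C ++ [(b, a)]).getLast? = some (b, a) := by
      rw [List.getLast?_append_of_ne_nil _ (l₂ := [(b, a)]) (by simp)]; simp
    rw [hf] at this
    obtain rfl : f = (b, a) := by injection this
    exact hav hfv
  -- chain facts on the l1 side
  have hcS : (A2 ++ (a, b) :: B).Chain' (fun e f => e.2 = f.1) := hc1.right_of_append
  have hcA2 : A2.Chain' (fun e f => e.2 = f.1) := hcS.left_of_append
  have hlinkA2 : ∀ p ∈ A2.getLast?, p.2 = a :=
    fun p hp => (List.isChain_append.1 hcS).2.2 p hp (a, b) (by simp)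
  have heA2 : A2.head? = some e := by
    rwa [List.head?_append_of_ne_nil _ hA2ne] at he
  -- chain facts on the l2 side
  have hc2' : ((b, a) :: (E1 ++ E2)).Chain' (fun e f => e.2 = f.1) := by
    have : (C ++ (b, a) :: E1) ++ E2 = C ++ ((b, a) :: (E1 ++ E2)) := by simp
    exact (this ▸ hc2).right_of_append
  have hcE1 : E1.Chain' (fun e f => e.2 = f.1) := hc2'.tail.left_of_append
  have hlinkE1 : ∀ q ∈ E1.head?, q.1 = a := by
    intro q hq
    have hq' : (E1 ++ E2).head? = some q := by
      rwa [List.head?_append_of_ne_nil _ hE1ne]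
    exact ((List.isChain_cons.1 hc2').1 q hq').symm
  have hfE1 : E1.getLast? = some f := by
    have : (C ++ (b, a) :: E1).getLast? = E1.getLast? := by
      rw [show C ++ (b, a) :: E1 = (C ++ [(b, a)]) ++ E1 by simp,
        List.getLast?_append_of_ne_nil _ hE1ne]
    rwa [this] at hf
  -- build the closed walk
  have hsub : ∀ e' ∈ A2 ++ E1,
      e' ∈ A1 ++ (A2 ++ (a, b) :: B) ∨ e' ∈ (C ++ (b, a) :: E1) ++ E2 := by
    intro e' he'
    rcases List.mem_append.1 he' with h | h
    · exact Or.inl (by simp [h])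
    · exact Or.inr (by simp [h])
  refine closedReduce19 G EU D hacyc v oloc hskew (A2 ++ E1).length (A2 ++ E1) le_rfl
    (by simp [hA2ne]) ?_ ?_ ?_ ?_ ?_
  · refine List.isChain_append.2 ⟨hcA2, hcE1, ?_⟩
    intro p hp q hq
    rw [hlinkA2 p hp, hlinkE1 q hq]
  · intro e' he'
    rcases hsub e' he' with h | h
    · exact hvalid1 e' h
    · exact hvalid2 e' h
  · intro e' he' hv'
    rcases hsub e' he' with h | h
    · exact holoc1 e' h hv'
    · exact holoc2 e' h hv'
  · intro e' he'
    rw [List.head?_append_of_ne_nil _ hA2ne, heA2] at he'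
    obtain rfl : e = e' := by injection he'
    exact hev
  · intro f' hf'
    rw [List.getLast?_append_of_ne_nil _ hE1ne, hfE1] at hf'
    obtain rfl : f = f' := by injection hf'
    exact hfv


/-- Local-to-global orientation. A mixed graph is given by a simple graph `G`
whose edges split into undirected ones `EU` and pre-directed ones `D`; the
mixed graph is acyclic (no closed mixed walk using pairwise-distinct edges,
each traversed consistently with `D`). Paths are encoded as nonempty lists of
directed steps. If every path of `S` is a shortest path crossing `v` and the
local paths at `v` are simultaneously satisfied by one orientation of the star
of `v`, then no two paths of `S` are in conflict (no shared undirected edge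
receives opposite directions), and there is an orientation of all of `G`,
consistent with `D`, under which every path of `S` is directed from its source
to its target. -/
theorem stmt19 {V : Type*} [DecidableEq V] (G : SimpleGraph V)
    (EU : Set (Sym2 V)) (D : V → V → Prop)
    (hEU : EU ⊆ G.edgeSet)
    (hD : ∀ a b, D a b → G.Adj a b ∧ Sym2.mk a b ∉ EU ∧ ¬ D b a)
    (hacyc : ¬ ∃ l : List (V × V), l ≠ [] ∧
        List.Chain' (fun e f => e.2 = f.1) l ∧
        (∀ e ∈ l, G.Adj e.1 e.2 ∧ (Sym2.mk.uncurry e ∈ EU ∨ D e.1 e.2)) ∧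
        (∀ e f, l.head? = some e → l.getLast? = some f → f.2 = e.1) ∧
        (l.map Sym2.mk.uncurry).Nodup)
    (v : V) (S : Finset (List (V × V)))
    (hwalk : ∀ l ∈ S, l ≠ [] ∧ List.Chain' (fun e f => e.2 = f.1) l ∧
        ∀ e ∈ l, G.Adj e.1 e.2 ∧ (Sym2.mk.uncurry e ∈ EU ∨ D e.1 e.2))
    (hshort : ∀ l ∈ S, ∀ e f : V × V, l.head? = some e → l.getLast? = some f →
        l.length = G.dist e.1 f.2)
    (hcross : ∀ l ∈ S, ∃ e ∈ l, e.1 = v ∨ e.2 = v)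
    (hlocal : ∃ oloc : V → V → Bool,
        (∀ a b, G.Adj a b → oloc a b = !oloc b a) ∧
        (∀ a b, D a b → oloc a b = true) ∧
        ∀ l ∈ S, ∀ e ∈ l, (e.1 = v ∨ e.2 = v) → oloc e.1 e.2 = true) :
    (∀ l1 ∈ S, ∀ l2 ∈ S, ∀ a b : V,
        (a, b) ∈ l1 → (b, a) ∈ l2 → Sym2.mk a b ∉ EU) ∧
    ∃ ori : V → V → Bool,
      (∀ a b, G.Adj a b → ori a b = !ori b a) ∧
      (∀ a b, D a b → ori a b = true) ∧
      ∀ l ∈ S, ∀ e ∈ l, ori e.1 e.2 = true := by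
  classical
  obtain ⟨oloc, hskew, holocD, hsat⟩ := hlocal
  -- the key fact: no two paths of S traverse a common edge in opposite directions
  have key : ∀ l1 ∈ S, ∀ l2 ∈ S, ∀ a b : V, (a, b) ∈ l1 → (b, a) ∈ l2 → False := by
    intro l1 hl1 l2 hl2 a b hab hba
    obtain ⟨hne1, hc1, hvalid1⟩ := hwalk l1 hl1
    obtain ⟨hne2, hc2, hvalid2⟩ := hwalk l2 hl2
    have holoc1 := hsat l1 hl1
    have holoc2 := hsat l2 hl2
    have hsh1 := hshort l1 hl1
    have hsh2 := hshort l2 hl2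
    by_cases habv : a = v ∨ b = v
    · have h1 : oloc a b = true := holoc1 (a, b) hab habv
      have h2 : oloc b a = true := holoc2 (b, a) hba habv.symm
      have := hskew a b (hvalid1 (a, b) hab).1
      rw [h1, h2] at this
      simp at this
    push_neg at habv
    obtain ⟨hav, hbv⟩ := habv
    obtain ⟨g1, hg1, hg1v⟩ := hcross l1 hl1
    obtain ⟨g2, hg2, hg2v⟩ := hcross l2 hl2
    obtain ⟨A, B, hl1eq⟩ := List.append_of_mem hab
    obtain ⟨C, E, hl2eq⟩ := List.append_of_mem hba
    rw [hl1eq] at hc1 hvalid1 holoc1 hsh1 hg1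
    rw [hl2eq] at hc2 hvalid2 holoc2 hsh2 hg2
    have hpos1 := posSplit19 A B hc1 g1 hg1 hg1v
    have hpos2 := posSplit19 C E hc2 g2 hg2 hg2v
    rcases hpos1 with ⟨A1, A2, e, hAsplit, he, hev⟩ | ⟨B1, B2, f1, hBsplit, hf1, hf1v⟩
    · rcases hpos2 with ⟨C1, C2, e2, hCsplit, he2, he2v⟩ | ⟨E1, E2, f2, hEsplit, hf2, hf2v⟩
      · -- both case I : distance contradiction
        subst hAsplit hCsplit
        rw [List.append_assoc] at hc1 hvalid1 hsh1 hc2 hvalid2 hsh2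
        have hd1 := distI19 G A1 A2 B e hc1 (fun e' h => (hvalid1 e' h).1) hsh1 he hev
        have hd2 := distI19 G C1 C2 E e2 hc2 (fun e' h => (hvalid2 e' h).1) hsh2 he2 he2v
        omega
      · -- l1 case I, l2 case II : mixed cycle contradiction
        subst hAsplit hEsplit
        rw [List.append_assoc] at hc1 hvalid1 holoc1
        rw [show C ++ (b, a) :: (E1 ++ E2) = (C ++ (b, a) :: E1) ++ E2 by simp]
          at hc2 hvalid2 holoc2
        exact cycleKernel19 G EU D hacyc v oloc hskew hav A1 A2 B e hc1 hvalid1 holoc1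
          he hev C E1 E2 f2 hc2 hvalid2 holoc2 hf2 hf2v
    · rcases hpos2 with ⟨C1, C2, e2, hCsplit, he2, he2v⟩ | ⟨E1, E2, f2, hEsplit, hf2, hf2v⟩
      · -- l1 case II, l2 case I : mixed cycle contradiction (mirrored)
        subst hCsplit hBsplit
        rw [List.append_assoc] at hc2 hvalid2 holoc2
        rw [show A ++ (a, b) :: (B1 ++ B2) = (A ++ (a, b) :: B1) ++ B2 by simp]
          at hc1 hvalid1 holoc1
        exact cycleKernel19 G EU D hacyc v oloc hskew hbv C1 C2 E e2 hc2 hvalid2 holoc2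
          he2 he2v A B1 B2 f1 hc1 hvalid1 holoc1 hf1 hf1v
      · -- both case II : distance contradiction
        subst hBsplit hEsplit
        rw [show A ++ (a, b) :: (B1 ++ B2) = (A ++ (a, b) :: B1) ++ B2 by simp]
          at hc1 hvalid1 hsh1
        rw [show C ++ (b, a) :: (E1 ++ E2) = (C ++ (b, a) :: E1) ++ E2 by simp]
          at hc2 hvalid2 hsh2
        have hd1 := distII19 G A B1 B2 f1 hc1 (fun e' h => (hvalid1 e' h).1) hsh1 hf1 hf1v hbv
        have hd2 := distII19 G C E1 E2 f2 hc2 (fun e' h => (hvalid2 e' h).1) hsh2 hf2 hf2v hav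
        omega
  refine ⟨fun l1 hl1 l2 hl2 a b hab hba _ => key l1 hl1 l2 hl2 a b hab hba, ?_⟩
  refine ⟨fun a b => if (∃ l ∈ S, (a, b) ∈ l) then true
      else if (∃ l ∈ S, (b, a) ∈ l) then false else oloc a b, ?_, ?_, ?_⟩
  · intro a b hadj
    by_cases h1 : ∃ l ∈ S, (a, b) ∈ l
    · have h2 : ¬ ∃ l ∈ S, (b, a) ∈ l := by
        rintro ⟨l2, hl2, hba⟩
        obtain ⟨l1, hl1, hab⟩ := h1
        exact key l1 hl1 l2 hl2 a b hab hba
      simp [h1, h2]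
    · by_cases h2 : ∃ l ∈ S, (b, a) ∈ l
      · simp [h1, h2]
      · simp [h1, h2, hskew a b hadj]
  · intro a b hDab
    by_cases h1 : ∃ l ∈ S, (a, b) ∈ l
    · simp [h1]
    · have h2 : ¬ ∃ l ∈ S, (b, a) ∈ l := by
        rintro ⟨l2, hl2, hba⟩
        obtain ⟨-, -, hvalid2⟩ := hwalk l2 hl2
        rcases (hvalid2 (b, a) hba).2 with hmem | hDba
        · exact (hD a b hDab).2.1 (by rwa [Sym2.eq_swap])
        · exact (hD a b hDab).2.2 hDba
      simp [h1, h2, holocD a b hDab]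
  · intro l hl e he
    have : ∃ l' ∈ S, (e.1, e.2) ∈ l' := ⟨l, hl, by simpa using he⟩
    simp [this]
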